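/- Let a, b > 0 and real constants c1, c2. The function u(t,x) = c1 + (a/(2b))·x·(c2 + (a/2)·t - log x) satisfies u_t + a·x²·u_xx + b·x³·(u_xx)² = 0 for x > 0. -/

import Mathlib

theorem stmt11 (a b c1 c2 : ℝ)
    (ha : 0 < a)
    (hb : 0 < b)
    (u : ℝ → ℝ → ℝ)
    (hu : ∀ t x : ℝ, u t x = c1 + (a / (2 * b)) * x * (c2 + (a / 2) * t - Real.log x)) :
    ∀ t x : ℝ, 0 < x →
      deriv (fun s => u s x) t
      + a * x ^ 2 * deriv (fun y => deriv (fun z => u t z) y) x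
      + b * x ^ 3 * (deriv (fun y => deriv (fun z => u t z) y) x) ^ 2 = 0 := by
  intro t x hx
  set k := a / (2 * b) with hk
  have h1 : deriv (fun s => u s x) t = k * x * (a / 2) := by
    have hfun : (fun s => u s x) = fun s => c1 + k * x * (c2 + (a / 2) * s - Real.log x) := by
      funext s; rw [hu]
    rw [hfun]
    have h0 : HasDerivAt (fun s : ℝ => c2 + (a / 2) * s - Real.log x) (a / 2) t := by
      simpa using (((hasDerivAt_id t).const_mul (a / 2)).const_add c2).sub_const (Real.log x)
    have h : HasDerivAt (fun s : ℝ => c1 + k * x * (c2 + (a / 2) * s - Real.log x))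
        (k * x * (a / 2)) t := by
      simpa [mul_comm] using (h0.const_mul (k * x)).const_add c1
    exact h.deriv
  set C := c2 + (a / 2) * t with hC
  have hder : ∀ y : ℝ, 0 < y → HasDerivAt (fun z => u t z) (k * (C - Real.log y) - k) y := by
    intro y hy
    have hfun : (fun z => u t z) = fun z => c1 + k * (z * (C - Real.log z)) := by
      funext z; rw [hu]; ring
    rw [hfun]
    have hlog : HasDerivAt (fun z : ℝ => C - Real.log z) (-(1 / y)) y := by
      simpa using ((Real.hasDerivAt_log (ne_of_gt hy)).const_sub C)
    have h2 := ((hasDerivAt_id y).mul hlog).const_mul k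
    have h3 : HasDerivAt (fun z : ℝ => c1 + k * (z * (C - Real.log z)))
        (k * (C - Real.log y) - k) y := by
      refine (h2.const_add c1).congr_deriv ?_
      rw [id, mul_neg, mul_one_div_cancel hy.ne']
      ring
    exact h3
  have heq : (fun y => deriv (fun z => u t z) y) =ᶠ[nhds x]
      fun y => k * (C - Real.log y) - k := by
    filter_upwards [IsOpen.mem_nhds isOpen_Ioi hx] with y hy
    exact (hder y hy).deriv
  have h2 : deriv (fun y => deriv (fun z => u t z) y) x = -(k / x) := by
    rw [heq.deriv_eq]
    have hlog : HasDerivAt (fun y : ℝ => C - Real.log y) (-(1 / x)) x := by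
      simpa using ((Real.hasDerivAt_log (ne_of_gt hx)).const_sub C)
    have h : HasDerivAt (fun y : ℝ => k * (C - Real.log y) - k) (-(k / x)) x := by
      have := (hlog.const_mul k).sub_const k
      exact this.congr_deriv (by ring)
    exact h.deriv
  rw [h1, h2, hk]
  field_simp
  ring
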